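/- (Lemma 4) For every L ≥ 0, ‖v − w_L‖_∞ ≤ γ^L ‖v‖_∞. In particular, for every query index ω ∈ {1,…,n}, the difference between the expected Monte Carlo return (which equals v_ω) and the depth-L Transformer output with TD parameters satisfies |v_ω − TF_L(Z_0(ω); θ_L^TD)| ≤ γ^L ‖v‖_∞. -/

import Mathlib

open Matrix Filter Topology

noncomputable section

/-- Index type for `2n` rows (two stacked copies of the feature dimension). -/
abbrev TwoN (n : ℕ) := Fin n ⊕ Fin n
/-- Row index type for prompts: `2n + 1`. -/
abbrev RIdx (n : ℕ) := TwoN n ⊕ Unit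
/-- Column index type for prompts: `n + 1` (context columns plus the query column). -/
abbrev CIdx (n : ℕ) := Fin n ⊕ Unit

/-- The mask `M = [[I_n, 0],[0, 0]]`. -/
def maskM (n : ℕ) : Matrix (CIdx n) (CIdx n) ℝ := Matrix.fromBlocks 1 0 0 0

/-- One linear attention layer `Z ↦ Z + P̃ Z M (Zᵀ Q̃ Z)`. -/
def attnLayer (n : ℕ) (Pm Qm : Matrix (RIdx n) (RIdx n) ℝ)
    (Z : Matrix (RIdx n) (CIdx n) ℝ) : Matrix (RIdx n) (CIdx n) ℝ :=
  Z + Pm * Z * maskM n * (Zᵀ * Qm * Z)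

/-- `P̃ = [[0, 0],[u, 1]]`. -/
def Pmat (n : ℕ) (u : Matrix Unit (TwoN n) ℝ) : Matrix (RIdx n) (RIdx n) ℝ :=
  Matrix.fromBlocks 0 0 u 1

/-- `Q̃ = [[A, 0],[0, 0]]`. -/
def Qmat (n : ℕ) (A : Matrix (TwoN n) (TwoN n) ℝ) : Matrix (RIdx n) (RIdx n) ℝ :=
  Matrix.fromBlocks A 0 0 0

/-- `A^TD = [[-I, I],[0, 0]]`. -/
def Atd (n : ℕ) : Matrix (TwoN n) (TwoN n) ℝ := Matrix.fromBlocks (-1) 1 0 0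

/-- A row-stochastic matrix. -/
def RowStochastic {n : ℕ} (P : Matrix (Fin n) (Fin n) ℝ) : Prop :=
  (∀ i k, 0 ≤ P i k) ∧ ∀ i, ∑ k, P i k = 1

/-- TD iterates `w_0 = 0`, `w_{l+1} = r + γ P w_l`. -/
def tdW {n : ℕ} (γ : ℝ) (P : Matrix (Fin n) (Fin n) ℝ) (r : Fin n → ℝ) : ℕ → Fin n → ℝ
  | 0 => 0
  | l + 1 => r + γ • P.mulVec (tdW γ P r l)

/-- The value vector `v = (I - γ P)⁻¹ r`. -/
def valueV {n : ℕ} (γ : ℝ) (P : Matrix (Fin n) (Fin n) ℝ) (r : Fin n → ℝ) : Fin n → ℝ :=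
  ((1 : Matrix (Fin n) (Fin n) ℝ) - γ • P)⁻¹.mulVec r

/-- The prompt `Z_0(j)`: the `i`-th column is `(e_i, γ Pᵀ e_i, r_i)` and the query
column is `(e_j, 0, 0)`. -/
def prompt {n : ℕ} (γ : ℝ) (P : Matrix (Fin n) (Fin n) ℝ) (r : Fin n → ℝ) (j : Fin n) :
    Matrix (RIdx n) (CIdx n) ℝ := fun p q =>
  match p, q with
  | Sum.inl (Sum.inl k), Sum.inl i => if k = i then 1 else 0
  | Sum.inl (Sum.inr k), Sum.inl i => γ * P i k
  | Sum.inr _, Sum.inl i => r i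
  | Sum.inl (Sum.inl k), Sum.inr _ => if k = j then 1 else 0
  | Sum.inl (Sum.inr _), Sum.inr _ => 0
  | Sum.inr _, Sum.inr _ => 0

/-- Embeddings `Z_l` of the looped transformer with shared parameters `(A, u)`,
starting from the prompt `Z_0(j)`. -/
def embed {n : ℕ} (γ : ℝ) (P : Matrix (Fin n) (Fin n) ℝ) (r : Fin n → ℝ) (j : Fin n)
    (A : Matrix (TwoN n) (TwoN n) ℝ) (u : Matrix Unit (TwoN n) ℝ) :
    ℕ → Matrix (RIdx n) (CIdx n) ℝ
  | 0 => prompt γ P r j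
  | l + 1 => attnLayer n (Pmat n u) (Qmat n A) (embed γ P r j A u l)

/-- Looped `L`-layer transformer output `F_L^{(j)}(A, u) = -(Z_L)_{2n+1, n+1}`. -/
def tfOut {n : ℕ} (γ : ℝ) (P : Matrix (Fin n) (Fin n) ℝ) (r : Fin n → ℝ) (j : Fin n)
    (A : Matrix (TwoN n) (TwoN n) ℝ) (u : Matrix Unit (TwoN n) ℝ) (L : ℕ) : ℝ :=
  -(embed γ P r j A u L (Sum.inr ()) (Sum.inr ()))

/-- `TF_L(Z_0(j); θ_L^TD)`: the transformer output with the TD parameters. -/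
def tfTD {n : ℕ} (γ : ℝ) (P : Matrix (Fin n) (Fin n) ℝ) (r : Fin n → ℝ) (j : Fin n) (L : ℕ) : ℝ :=
  tfOut γ P r j (Atd n) 0 L

/-- `X ∈ ℝ^{2n×n}`: the `i`-th column is `(e_i, γ Pᵀ e_i)`. -/
def Xmat {n : ℕ} (γ : ℝ) (P : Matrix (Fin n) (Fin n) ℝ) : Matrix (TwoN n) (Fin n) ℝ :=
  fun p i => match p with
  | Sum.inl k => if k = i then 1 else 0
  | Sum.inr k => γ * P i k

/-- The query vector `x^q = (e_ω, 0) ∈ ℝ^{2n}`. -/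
def xqv {n : ℕ} (ω : Fin n) : TwoN n → ℝ := fun p =>
  match p with
  | Sum.inl k => if k = ω then 1 else 0
  | Sum.inr _ => 0

/-- Operator norm induced by the ℓ1 vector norm: maximum absolute column sum. -/
def matL1 {m k : Type*} [Fintype m] [Fintype k] (B : Matrix m k ℝ) : ℝ :=
  ⨆ j, ∑ i, |B i j|

/-- `G_0^{(i)} = 0`, `G_{l+1}^{(i)} = X (r - w_l) (X e_i)ᵀ + γ Σ_j P_{ij} G_l^{(j)}`. -/
def Gseq {n : ℕ} (γ : ℝ) (P : Matrix (Fin n) (Fin n) ℝ) (r : Fin n → ℝ) :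
    ℕ → Fin n → Matrix (TwoN n) (TwoN n) ℝ
  | 0 => fun _ => 0
  | l + 1 => fun i =>
      Matrix.vecMulVec ((Xmat γ P).mulVec (r - tdW γ P r l)) ((Xmat γ P).mulVec (Pi.single i 1))
        + γ • ∑ j, P i j • Gseq γ P r l j

/-- `H_0 = 0`, `H_{l+1} = H_l + X (r - w_l) (x^q)ᵀ - G_l^{(ω)}`. -/
def Hseq {n : ℕ} (γ : ℝ) (P : Matrix (Fin n) (Fin n) ℝ) (r : Fin n → ℝ) (ω : Fin n) :
    ℕ → Matrix (TwoN n) (TwoN n) ℝ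
  | 0 => 0
  | l + 1 => Hseq γ P r ω l
      + Matrix.vecMulVec ((Xmat γ P).mulVec (r - tdW γ P r l)) (xqv ω)
      - Gseq γ P r l ω

/-- `U_0 = 0`, `U_{l+1} = X Xᵀ A^TD X + γ U_l Pᵀ`. -/
def Useq {n : ℕ} (γ : ℝ) (P : Matrix (Fin n) (Fin n) ℝ) : ℕ → Matrix (TwoN n) (Fin n) ℝ
  | 0 => 0
  | l + 1 => Xmat γ P * (Xmat γ P)ᵀ * Atd n * Xmat γ P + γ • (Useq γ P l * Pᵀ)

/-- `h_0 = 0`, `h_{l+1} = h_l + X Xᵀ A^TD x^q + U_l Xᵀ A^TD x^q`. -/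
def hseq {n : ℕ} (γ : ℝ) (P : Matrix (Fin n) (Fin n) ℝ) (ω : Fin n) : ℕ → TwoN n → ℝ
  | 0 => 0
  | l + 1 => hseq γ P ω l
      + (Xmat γ P * (Xmat γ P)ᵀ * Atd n).mulVec (xqv ω)
      + (Useq γ P l * (Xmat γ P)ᵀ * Atd n).mulVec (xqv ω)

/-- `g_L(j)`: the vector of all partial derivatives of `F_L^{(j)}` with respect to the
entries of `A` and of `u`, evaluated at the TD parameters `(A^TD, 0)`. -/
def gvec {n : ℕ} (γ : ℝ) (P : Matrix (Fin n) (Fin n) ℝ) (r : Fin n → ℝ) (L : ℕ) (j : Fin n) :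
    (TwoN n × TwoN n) ⊕ TwoN n → ℝ
  | Sum.inl ab => deriv (fun t : ℝ =>
      tfOut γ P r j (Atd n + t • Matrix.single ab.1 ab.2 1) 0 L) 0
  | Sum.inr k => deriv (fun t : ℝ =>
      tfOut γ P r j (Atd n) (t • Matrix.single () k 1) L) 0


def cseq {n : ℕ} (γ : ℝ) (P : Matrix (Fin n) (Fin n) ℝ) (r : Fin n → ℝ) : ℕ → Fin n → ℝ
  | 0 => r
  | l + 1 => γ • P.mulVec (cseq γ P r l)

lemma tdW_succ {n : ℕ} (γ : ℝ) (P : Matrix (Fin n) (Fin n) ℝ) (r : Fin n → ℝ) (l : ℕ) :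
    tdW γ P r (l + 1) = tdW γ P r l + cseq γ P r l := by
  induction l with
  | zero => simp [tdW, cseq]
  | succ l ih =>
    show r + γ • P.mulVec (tdW γ P r (l+1)) = tdW γ P r (l+1) + cseq γ P r (l+1)
    calc r + γ • P.mulVec (tdW γ P r (l+1))
        = r + γ • P.mulVec (tdW γ P r l + cseq γ P r l) := by rw [ih]
      _ = (r + γ • P.mulVec (tdW γ P r l)) + γ • P.mulVec (cseq γ P r l) := by
          rw [Matrix.mulVec_add, smul_add]; abel
      _ = tdW γ P r (l+1) + cseq γ P r (l+1) := rfl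

def Zexp {n : ℕ} (γ : ℝ) (P : Matrix (Fin n) (Fin n) ℝ) (r : Fin n → ℝ) (ω : Fin n) (l : ℕ) :
    Matrix (RIdx n) (CIdx n) ℝ := fun p q =>
  match p, q with
  | Sum.inl (Sum.inl k), Sum.inl i => if k = i then 1 else 0
  | Sum.inl (Sum.inr k), Sum.inl i => γ * P i k
  | Sum.inr _, Sum.inl i => cseq γ P r l i
  | Sum.inl (Sum.inl k), Sum.inr _ => if k = ω then 1 else 0
  | Sum.inl (Sum.inr _), Sum.inr _ => 0
  | Sum.inr _, Sum.inr _ => -(tdW γ P r l ω)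

lemma hS {n : ℕ} (γ : ℝ) (P : Matrix (Fin n) (Fin n) ℝ) (r : Fin n → ℝ) (ω : Fin n) (l : ℕ)
    (i : Fin n) (q : CIdx n) :
    ((Zexp γ P r ω l)ᵀ * Qmat n (Atd n) * Zexp γ P r ω l) (Sum.inl i) q =
      -(Zexp γ P r ω l) (Sum.inl (Sum.inl i)) q + (Zexp γ P r ω l) (Sum.inl (Sum.inr i)) q := by
  rw [Matrix.mul_apply]
  have hrow : ∀ p : RIdx n, ((Zexp γ P r ω l)ᵀ * Qmat n (Atd n)) (Sum.inl i) p =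
      match p with
      | Sum.inl (Sum.inl k) => -(if i = k then 1 else 0)
      | Sum.inl (Sum.inr k) => if i = k then 1 else 0
      | Sum.inr _ => 0 := by
    intro p
    rw [Matrix.mul_apply]
    rcases p with (k | k) | u <;>
      simp [Qmat, Atd, Zexp, Matrix.fromBlocks, Fintype.sum_sum_type, Finset.sum_ite_eq,
        Finset.sum_ite_eq', Matrix.one_apply, eq_comm]
  simp only [hrow]
  rw [Fintype.sum_sum_type]
  rw [Fintype.sum_sum_type]
  simp [Finset.sum_ite_eq, Finset.sum_ite_eq', Zexp]


lemma embed_td {n : ℕ} (γ : ℝ) (P : Matrix (Fin n) (Fin n) ℝ) (r : Fin n → ℝ) (ω : Fin n) :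
    ∀ l, embed γ P r ω (Atd n) 0 l = Zexp γ P r ω l := by
  intro l
  induction l with
  | zero =>
    funext p q
    rcases p with (k | k) | u <;> rcases q with i | u' <;>
      simp [embed, prompt, Zexp, cseq, tdW]
  | succ l ih =>
    show attnLayer n (Pmat n 0) (Qmat n (Atd n)) (embed γ P r ω (Atd n) 0 l) = _
    rw [ih]
    set Z := Zexp γ P r ω l with hZdef
    have hPZ : ∀ (p : RIdx n) (q : CIdx n), (Pmat n 0 * Z) p q =
        match p with | Sum.inl _ => 0 | Sum.inr _ => Z (Sum.inr ()) q := by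
      intro p q; rw [Matrix.mul_apply]
      rcases p with a | u <;>
        simp [Pmat, Matrix.fromBlocks, Fintype.sum_sum_type]
    have hW : ∀ (p : RIdx n) (q : CIdx n), (Pmat n 0 * Z * maskM n) p q =
        match p, q with
        | Sum.inl _, _ => 0
        | Sum.inr _, Sum.inl i => Z (Sum.inr ()) (Sum.inl i)
        | Sum.inr _, Sum.inr _ => 0 := by
      intro p q
      rw [Matrix.mul_apply]
      simp only [hPZ]
      rcases p with a | u <;> rcases q with i | u' <;>
        simp [maskM, Matrix.fromBlocks, Fintype.sum_sum_type, Matrix.one_apply,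
          Finset.sum_ite_eq, Finset.sum_ite_eq']
    funext p q
    show Z p q + (Pmat n 0 * Z * maskM n * (Zᵀ * Qmat n (Atd n) * Z)) p q = _
    rw [Matrix.mul_apply]
    simp only [hW]
    rcases p with (k | k) | u
    · rcases q with i | u' <;> simp [hZdef, Zexp]
    · rcases q with i | u' <;> simp [hZdef, Zexp]
    · rw [Fintype.sum_sum_type]
      simp only [hS γ P r ω l]
      rcases q with i | u'
      · show Z (Sum.inr ()) (Sum.inl i) + _ = cseq γ P r (l+1) i
        have : cseq γ P r (l + 1) i = γ * ∑ k, P i k * cseq γ P r l k := by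
          simp [cseq, Matrix.mulVec, dotProduct]
        rw [this]
        simp only [hZdef, Zexp]
        simp [hS γ P r ω l, Zexp, mul_add, mul_ite, Finset.sum_add_distrib, Finset.sum_ite_eq',
          Finset.mul_sum, mul_comm, mul_left_comm]
      · show Z (Sum.inr ()) (Sum.inr ()) + _ = -(tdW γ P r (l+1) ω)
        have h2 : tdW γ P r (l+1) ω = tdW γ P r l ω + cseq γ P r l ω := by
          rw [tdW_succ]; rfl
        rw [h2]
        simp only [hZdef, Zexp]
        simp [hS γ P r ω l, Zexp, mul_add, mul_ite, Finset.sum_add_distrib, Finset.sum_ite_eq',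
          Finset.mul_sum, mul_comm, mul_left_comm]
        ring

lemma tfTD_eq {n : ℕ} (γ : ℝ) (P : Matrix (Fin n) (Fin n) ℝ) (r : Fin n → ℝ) (ω : Fin n)
    (L : ℕ) : tfTD γ P r ω L = tdW γ P r L ω := by
  unfold tfTD tfOut
  rw [embed_td]
  simp [Zexp]

lemma mulVec_bound {n : ℕ} {P : Matrix (Fin n) (Fin n) ℝ} (hP : RowStochastic P)
    (x : Fin n → ℝ) : ‖P.mulVec x‖ ≤ ‖x‖ := by
  rw [pi_norm_le_iff_of_nonneg (norm_nonneg x)]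
  intro i
  rw [Real.norm_eq_abs]
  calc |∑ k, P i k * x k| ≤ ∑ k, |P i k * x k| := Finset.abs_sum_le_sum_abs _ _
    _ ≤ ∑ k, P i k * ‖x‖ := by
        refine Finset.sum_le_sum fun k _ => ?_
        rw [abs_mul, abs_of_nonneg (hP.1 i k)]
        exact mul_le_mul_of_nonneg_left ((Real.norm_eq_abs (x k)) ▸ norm_le_pi_norm x k)
          (hP.1 i k)
    _ = ‖x‖ := by rw [← Finset.sum_mul, hP.2 i, one_mul]

lemma det_ne_zero {n : ℕ} {γ : ℝ} (hγ0 : 0 ≤ γ) (hγ1 : γ < 1)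
    {P : Matrix (Fin n) (Fin n) ℝ} (hP : RowStochastic P) :
    ((1 : Matrix (Fin n) (Fin n) ℝ) - γ • P).det ≠ 0 := by
  intro hdet
  obtain ⟨x, hx0, hx⟩ := (Matrix.exists_mulVec_eq_zero_iff).2 hdet
  have hxeq : x = γ • P.mulVec x := by
    have := hx
    rw [Matrix.sub_mulVec, Matrix.one_mulVec, Matrix.smul_mulVec, sub_eq_zero] at this
    exact this
  have hnx : 0 < ‖x‖ := norm_pos_iff.2 hx0
  have : ‖x‖ ≤ γ * ‖x‖ := by
    calc ‖x‖ = ‖γ • P.mulVec x‖ := by rw [← hxeq]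
      _ = γ * ‖P.mulVec x‖ := by rw [norm_smul, Real.norm_of_nonneg hγ0]
      _ ≤ γ * ‖x‖ := mul_le_mul_of_nonneg_left (mulVec_bound hP x) hγ0
  nlinarith

lemma value_fixed {n : ℕ} {γ : ℝ} (hγ0 : 0 ≤ γ) (hγ1 : γ < 1)
    {P : Matrix (Fin n) (Fin n) ℝ} (hP : RowStochastic P) (r : Fin n → ℝ) :
    valueV γ P r = r + γ • P.mulVec (valueV γ P r) := by
  have hdet := det_ne_zero hγ0 hγ1 hP
  have h1 : ((1 : Matrix (Fin n) (Fin n) ℝ) - γ • P).mulVec (valueV γ P r) = r := by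
    unfold valueV
    rw [Matrix.mulVec_mulVec, Matrix.mul_nonsing_inv _ (isUnit_iff_ne_zero.2 hdet),
      Matrix.one_mulVec]
  rw [Matrix.sub_mulVec, Matrix.one_mulVec, Matrix.smul_mulVec] at h1
  exact sub_eq_iff_eq_add.mp h1


/-- Lemma 4: `‖v - w_L‖_∞ ≤ γ^L ‖v‖_∞`, and in particular the difference
between the expected Monte Carlo return `v_ω` and the depth-L transformer output with
TD parameters is bounded by `γ^L ‖v‖_∞`. -/
theorem stmt9 (n : ℕ) (hn : 1 ≤ n) (γ : ℝ) (hγ0 : 0 ≤ γ) (hγ1 : γ < 1)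
    (P : Matrix (Fin n) (Fin n) ℝ) (hP : RowStochastic P) (r : Fin n → ℝ)
    (L : ℕ) :
    ‖valueV γ P r - tdW γ P r L‖ ≤ γ ^ L * ‖valueV γ P r‖
    ∧ ∀ ω : Fin n, |valueV γ P r ω - tfTD γ P r ω L| ≤ γ ^ L * ‖valueV γ P r‖ := by
  set v := valueV γ P r with hv
  have main : ∀ L, ‖v - tdW γ P r L‖ ≤ γ ^ L * ‖v‖ := by
    intro L
    induction L with
    | zero => simp [tdW]
    | succ L ih =>
      have hstep : v - tdW γ P r (L + 1) = γ • P.mulVec (v - tdW γ P r L) := by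
        rw [show tdW γ P r (L+1) = r + γ • P.mulVec (tdW γ P r L) from rfl]
        rw [Matrix.mulVec_sub, smul_sub]
        have hvf : v = r + γ • P.mulVec v := value_fixed hγ0 hγ1 hP r
        nth_rewrite 1 [hvf]
        abel
      rw [hstep, norm_smul, Real.norm_of_nonneg hγ0, pow_succ, mul_comm (γ^L) γ, mul_assoc]
      exact mul_le_mul_of_nonneg_left (le_trans (mulVec_bound hP _) ih) hγ0
  refine ⟨main L, fun ω => ?_⟩
  rw [tfTD_eq]
  calc |v ω - tdW γ P r L ω| = ‖(v - tdW γ P r L) ω‖ := by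
        rw [Real.norm_eq_abs]; rfl
    _ ≤ ‖v - tdW γ P r L‖ := norm_le_pi_norm _ ω
    _ ≤ γ ^ L * ‖v‖ := main L

end
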